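/- Let P be the free group on one generator and X the free group on two generators, and let M be the crossed module (P ♭ X, P ∗ X, conj, κ), where P ♭ X = ker(π_P : P ∗ X → P) is a normal subgroup of the free product P ∗ X, conj is the conjugation action, and κ is the inclusion. Then M is a projective crossed module of groups, but for every set S there is no isomorphism of crossed modules between M and L(FreeGroup(S)). (Hence the variety of crossed modules of groups is not a Schreier variety: M is projective but not free.) -/

import Mathlib

open Function
open scoped Monoid.Coprod

/-- `π_B : B ∗ X →* B`, induced by the identity on `B` and trivial on `X`. -/
def piHom (B X : Type*) [Group B] [Group X] : (B ∗ X) →* B :=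
  Monoid.Coprod.lift (MonoidHom.id B) (1 : X →* B)

/-- `B ♭ X = ker (π_B : B ∗ X →* B)`. -/
def flatSub (B X : Type*) [Group B] [Group X] : Subgroup (B ∗ X) :=
  (piHom B X).ker

instance flatSub_normal (B X : Type*) [Group B] [Group X] : (flatSub B X).Normal :=
  MonoidHom.normal_ker (piHom B X)

/-- `η : H →* H ♭ H`, the corestriction of the second coproduct inclusion. -/
def etaHom (H : Type*) [Group H] : H →* flatSub H H :=
  MonoidHom.codRestrict (Monoid.Coprod.inr : H →* H ∗ H) (flatSub H H)
    (by intro x; simp [flatSub, piHom, MonoidHom.mem_ker])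
/-- `(T, G, φ, d)` is a crossed module of groups. -/
structure IsXMod {T G : Type*} [Group T] [Group G]
    (φ : G →* MulAut T) (d : T →* G) : Prop where
  compat : ∀ (g : G) (t : T), d (φ g t) = g * d t * g⁻¹
  peiffer : ∀ t t' : T, φ (d t) t' = t * t' * t⁻¹

/-- `(fT, fG)` is a morphism of crossed modules from `(T, G, φ, d)` to
`(T', G', φ', d')`. -/
def XModHom {T G T' G' : Type*} [Group T] [Group G] [Group T'] [Group G']
    (φ : G →* MulAut T) (d : T →* G) (φ' : G' →* MulAut T') (d' : T' →* G')
    (fT : T →* T') (fG : G →* G') : Prop :=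
  d'.comp fT = fG.comp d ∧ ∀ (g : G) (t : T), fT (φ g t) = φ' (fG g) (fT t)

/-- A crossed module `(T, G, φ, d)` is projective if every surjective morphism of
crossed modules onto it admits a section that is a morphism of crossed modules. -/
def IsProjXMod {T G : Type*} [Group T] [Group G]
    (φ : G →* MulAut T) (d : T →* G) : Prop :=
  ∀ (T' G' : Type*) [Group T'] [Group G'] (φ' : G' →* MulAut T') (d' : T' →* G'),
    IsXMod φ' d' →
    ∀ (fT : T' →* T) (fG : G' →* G), XModHom φ' d' φ d fT fG →
      Function.Surjective fT → Function.Surjective fG →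
      ∃ (gT : T →* T') (gG : G →* G'), XModHom φ d φ' d' gT gG ∧
        fT.comp gT = MonoidHom.id T ∧ fG.comp gG = MonoidHom.id G

/-- The conjugation action core of the semidirect product `Q ⋊[ψ] P` on `Q`:
`(q, x)` acts by `q' ↦ q * ψ x q' * q⁻¹`. -/
def sdConj {Q P : Type*} [Group Q] [Group P] (ψ : P →* MulAut Q) :
    (Q ⋊[ψ] P) →* MulAut Q :=
  SemidirectProduct.lift (MulAut.conj) ψ (by
    intro x
    ext q q'
    simp [MulAut.conj, mul_assoc])

namespace XProofAux

open Monoid FreeGroup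

noncomputable section

abbrev Pg := FreeGroup Unit
abbrev Xg := FreeGroup Bool
abbrev Eg := Pg ∗ Xg
abbrev Kg := FreeGroup (ℤ × Bool)

def uu : Pg := FreeGroup.of ()

lemma exists_zpow (p : Pg) : ∃ n : ℤ, p = uu ^ n := by
  induction p using FreeGroup.induction_on with
  | C1 => exact ⟨0, by simp⟩
  | of x => exact ⟨1, by cases x; rw [zpow_one]; rfl⟩
  | inv_of x _ => exact ⟨-1, by cases x; rw [zpow_neg, zpow_one]; rfl⟩
  | mul x y hx hy =>
    obtain ⟨n, rfl⟩ := hx; obtain ⟨m, rfl⟩ := hy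
    exact ⟨n + m, by rw [zpow_add]⟩

def shift : MulAut Kg := FreeGroup.freeGroupCongr ((Equiv.addRight (1:ℤ)).prodCongr (Equiv.refl Bool))

lemma shift_apply (m : ℤ) (c : Bool) :
    shift (FreeGroup.of (m, c)) = FreeGroup.of (m + 1, c) := by
  simp [shift]

lemma shift_symm_apply (m : ℤ) (c : Bool) :
    shift⁻¹ (FreeGroup.of (m, c)) = FreeGroup.of (m - 1, c) := by
  rw [MulAut.inv_def, shift, FreeGroup.freeGroupCongr_symm]
  simp [Equiv.prodCongr, sub_eq_add_neg]

lemma shift_zpow (n : ℤ) : ∀ (m : ℤ) (c : Bool),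
    (shift ^ n) (FreeGroup.of (m, c)) = FreeGroup.of (m + n, c) := by
  induction n using Int.induction_on with
  | zero => intro m c; simp
  | succ k ih =>
    intro m c
    have h : shift ^ ((k : ℤ) + 1) = shift ^ (k : ℤ) * shift := by
      rw [zpow_add, zpow_one]
    rw [h]
    show (shift ^ (k:ℤ)) (shift (FreeGroup.of (m, c))) = _
    rw [shift_apply, ih]
    congr 2
    ring
  | pred k ih =>
    intro m c
    have h : shift ^ (-(k : ℤ) - 1) = shift ^ (-(k : ℤ)) * shift⁻¹ := by
      rw [zpow_sub, zpow_one, zpow_neg]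
    rw [h]
    show (shift ^ (-(k:ℤ))) (shift⁻¹ (FreeGroup.of (m, c))) = _
    rw [shift_symm_apply, ih]
    congr 2
    ring

def psi : Pg →* MulAut Kg := FreeGroup.lift fun _ => shift

lemma psi_uu_zpow (n : ℤ) : psi (uu ^ n) = shift ^ n := by
  rw [map_zpow]
  congr 1

/-- `θ : K →* E`, sending `(n, c)` to `uⁿ c u⁻ⁿ`. -/
def theta : Kg →* Eg :=
  FreeGroup.lift fun x => Coprod.inl (uu ^ x.1) * Coprod.inr (FreeGroup.of x.2) *
    Coprod.inl (uu ^ (-x.1))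

lemma theta_of (n : ℤ) (c : Bool) :
    theta (FreeGroup.of (n, c)) =
      Coprod.inl (uu ^ n) * Coprod.inr (FreeGroup.of c) * Coprod.inl (uu ^ (-n)) := by
  simp [theta]

lemma theta_mem (k : Kg) : theta k ∈ flatSub Pg Xg := by
  have h : (piHom Pg Xg).comp theta = 1 := by
    apply FreeGroup.ext_hom
    rintro ⟨n, c⟩
    simp [theta, piHom, ← zpow_add]
  show theta k ∈ (piHom Pg Xg).ker
  rw [MonoidHom.mem_ker]
  calc piHom Pg Xg (theta k) = ((piHom Pg Xg).comp theta) k := rfl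
    _ = 1 := by rw [h]; rfl

/-- `s : K →* N`, the corestriction of `θ`. -/
def sHom : Kg →* flatSub Pg Xg :=
  (theta).codRestrict (flatSub Pg Xg) theta_mem

lemma sHom_coe (k : Kg) : (sHom k : Eg) = theta k := rfl

/-- `Φ : E →* K ⋊ P`. -/
def Phi : Eg →* Kg ⋊[psi] Pg :=
  Coprod.lift SemidirectProduct.inr
    (SemidirectProduct.inl.comp (FreeGroup.lift fun c => FreeGroup.of ((0:ℤ), c)))

lemma Phi_inl (p : Pg) : Phi (Coprod.inl p) = SemidirectProduct.inr p := by
  simp [Phi]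

lemma Phi_inr_of (c : Bool) :
    Phi (Coprod.inr (FreeGroup.of c)) = SemidirectProduct.inl (FreeGroup.of ((0:ℤ), c)) := by
  simp [Phi]

lemma psi_compat (p : Pg) :
    theta.comp (psi p).toMonoidHom =
      (MulAut.conj (Coprod.inl p : Eg)).toMonoidHom.comp theta := by
  obtain ⟨n, rfl⟩ := exists_zpow p
  apply FreeGroup.ext_hom
  rintro ⟨m, c⟩
  show theta (psi (uu ^ n) (FreeGroup.of (m, c))) =
    (Coprod.inl (uu ^ n) : Eg) * theta (FreeGroup.of (m, c)) * (Coprod.inl (uu ^ n) : Eg)⁻¹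
  rw [psi_uu_zpow, shift_zpow, theta_of, theta_of]
  have e3 : (Coprod.inl (uu ^ n) : Eg)⁻¹ = Coprod.inl (uu ^ (-n)) := by
    rw [zpow_neg]; exact ((Coprod.inl : Pg →* Eg).map_inv _).symm
  have e1 : uu ^ (m + n) = uu ^ n * uu ^ m := by rw [← zpow_add]; ring_nf
  have e2 : uu ^ (-(m + n)) = uu ^ (-m) * uu ^ (-n) := by rw [← zpow_add]; ring_nf
  rw [e3, e1, e2, (Coprod.inl : Pg →* Eg).map_mul, (Coprod.inl : Pg →* Eg).map_mul]
  group

/-- `Ψ : K ⋊ P →* E`. -/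
def Psi : Kg ⋊[psi] Pg →* Eg :=
  SemidirectProduct.lift theta Coprod.inl psi_compat

lemma Psi_Phi : Psi.comp Phi = MonoidHom.id Eg := by
  apply Coprod.hom_ext
  · ext p
    show Psi (Phi (Coprod.inl (FreeGroup.of p))) = Coprod.inl (FreeGroup.of p)
    rw [Phi_inl]
    simp [Psi]
  · ext c
    show Psi (Phi (Coprod.inr (FreeGroup.of c))) = Coprod.inr (FreeGroup.of c)
    rw [Phi_inr_of, show Psi (SemidirectProduct.inl (FreeGroup.of ((0:ℤ), c)))
      = theta (FreeGroup.of ((0:ℤ), c)) from SemidirectProduct.lift_inl _ _ _ _, theta_of]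
    simp

lemma Psi_Phi_apply (x : Eg) : Psi (Phi x) = x := by
  calc Psi (Phi x) = (Psi.comp Phi) x := rfl
    _ = x := by rw [Psi_Phi]; rfl

lemma rightHom_Phi (x : Eg) : SemidirectProduct.rightHom (Phi x) = piHom Pg Xg x := by
  have h : (SemidirectProduct.rightHom).comp Phi = piHom Pg Xg := by
    apply Coprod.hom_ext
    · ext p
      show SemidirectProduct.rightHom (Phi (Coprod.inl (FreeGroup.of p))) = _
      rw [Phi_inl]
      simp [piHom]
    · ext c
      show SemidirectProduct.rightHom (Phi (Coprod.inr (FreeGroup.of c))) = _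
      rw [Phi_inr_of]
      simp [piHom]
  calc SemidirectProduct.rightHom (Phi x) = ((SemidirectProduct.rightHom).comp Phi) x := rfl
    _ = _ := by rw [h]

lemma Phi_right_eq_one (t : flatSub Pg Xg) : (Phi (t : Eg)).right = 1 := by
  have := rightHom_Phi (t : Eg)
  have h2 : piHom Pg Xg (t : Eg) = 1 := t.2
  rw [h2] at this
  exact this

/-- `r : N →* K`, the retraction. -/
def rHom : flatSub Pg Xg →* Kg where
  toFun t := (Phi (t : Eg)).left
  map_one' := by simp
  map_mul' a b := by
    show (Phi ((a : Eg) * (b : Eg))).left = _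
    rw [Phi.map_mul, SemidirectProduct.mul_left, Phi_right_eq_one]
    simp

lemma sHom_rHom (t : flatSub Pg Xg) : sHom (rHom t) = t := by
  apply Subtype.ext
  rw [sHom_coe]
  have h1 : Phi (t : Eg) = SemidirectProduct.inl (rHom t) := by
    rw [← SemidirectProduct.inl_left_mul_inr_right (Phi (t : Eg)), Phi_right_eq_one]
    simp
    rfl
  have := Psi_Phi_apply (t : Eg)
  rw [h1] at this
  simpa [Psi] using this

lemma rHom_sHom : rHom.comp sHom = MonoidHom.id Kg := by
  apply FreeGroup.ext_hom
  rintro ⟨n, c⟩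
  show rHom (sHom (FreeGroup.of (n, c))) = FreeGroup.of (n, c)
  show (Phi ((sHom (FreeGroup.of (n, c)) : Eg))).left = _
  rw [sHom_coe, theta_of, Phi.map_mul, Phi.map_mul, Phi_inl, Phi_inl, Phi_inr_of]
  rw [SemidirectProduct.mul_left, SemidirectProduct.mul_left]
  simp only [SemidirectProduct.left_inr, SemidirectProduct.right_inr,
    SemidirectProduct.left_inl, SemidirectProduct.right_inl, SemidirectProduct.mul_right,
    mul_one, one_mul, map_one, psi_uu_zpow, shift_zpow, zero_add]
  simp

lemma rHom_sHom_apply (k : Kg) : rHom (sHom k) = k := by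
  calc rHom (sHom k) = (rHom.comp sHom) k := rfl
    _ = k := by rw [rHom_sHom]; rfl

/-- extensionality principle for homs out of `N = P ♭ X`. -/
lemma N_hom_ext {Z : Type*} [Group Z] {F1 F2 : flatSub Pg Xg →* Z}
    (h : ∀ (n : ℤ) (c : Bool), F1 (sHom (FreeGroup.of (n, c))) = F2 (sHom (FreeGroup.of (n, c)))) :
    F1 = F2 := by
  ext t
  have hs : F1.comp sHom = F2.comp sHom := by
    apply FreeGroup.ext_hom
    rintro ⟨n, c⟩
    exact h n c
  calc F1 t = F1 (sHom (rHom t)) := by rw [sHom_rHom]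
    _ = (F1.comp sHom) (rHom t) := rfl
    _ = (F2.comp sHom) (rHom t) := by rw [hs]
    _ = F2 (sHom (rHom t)) := rfl
    _ = F2 t := by rw [sHom_rHom]

/-- The basic elements `uⁿ c u⁻ⁿ` of `N`. -/
def kel (n : ℤ) (c : Bool) : flatSub Pg Xg := sHom (FreeGroup.of (n, c))

lemma kel_coe (n : ℤ) (c : Bool) :
    (kel n c : Eg) = Coprod.inl (uu ^ n) * Coprod.inr (FreeGroup.of c) *
      Coprod.inl (uu ^ (-n)) := by
  rw [kel, sHom_coe, theta_of]

lemma kel_zero_coe (c : Bool) : (kel 0 c : Eg) = Coprod.inr (FreeGroup.of c) := by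
  rw [kel_coe]
  simp

lemma conjNormal_inl_kel (m n : ℤ) (c : Bool) :
    MulAut.conjNormal (Coprod.inl (uu ^ m) : Eg) (kel n c) = kel (n + m) c := by
  apply Subtype.ext
  rw [MulAut.conjNormal_apply, kel_coe, kel_coe]
  have e1 : uu ^ (n + m) = uu ^ m * uu ^ n := by rw [← zpow_add]; ring_nf
  have e2 : uu ^ (-(n + m)) = uu ^ (-n) * uu ^ (-m) := by rw [← zpow_add]; ring_nf
  have e3 : (Coprod.inl (uu ^ m) : Eg)⁻¹ = Coprod.inl (uu ^ (-m)) := by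
    rw [zpow_neg]; exact ((Coprod.inl : Pg →* Eg).map_inv _).symm
  rw [e3, e1, e2, (Coprod.inl : Pg →* Eg).map_mul, (Coprod.inl : Pg →* Eg).map_mul]
  group

lemma conjNormal_inr_of (c₀ : Bool) (t : flatSub Pg Xg) :
    MulAut.conjNormal (Coprod.inr (FreeGroup.of c₀) : Eg) t =
      kel 0 c₀ * t * (kel 0 c₀)⁻¹ := by
  apply Subtype.ext
  rw [MulAut.conjNormal_apply]
  push_cast
  rw [kel_zero_coe]

end

end XProofAux

section HomCount

/-- Composition with a `MulEquiv` gives an equivalence of hom-sets. -/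
def homCongr {A B C : Type*} [Group A] [Group B] [Group C] (e : A ≃* B) :
    (A →* C) ≃ (B →* C) where
  toFun f := f.comp e.symm.toMonoidHom
  invFun f := f.comp e.toMonoidHom
  left_inv f := by ext a; simp
  right_inv f := by ext b; simp

end HomCount

/-- Let `P` be the free group on one generator, `X` the free group on two generators,
and `M = (P ♭ X, P ∗ X, conj, κ)`.  Then `M` is a projective crossed module of groups,
but it is not isomorphic to any free crossed module `L(FreeGroup S)`; hence the variety
of crossed modules of groups is not a Schreier variety. -/
theorem xmod_projective_not_free :
    IsProjXMod
      (MulAut.conjNormal :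
        (FreeGroup Unit ∗ FreeGroup Bool) →* MulAut (flatSub (FreeGroup Unit) (FreeGroup Bool)))
      (flatSub (FreeGroup Unit) (FreeGroup Bool)).subtype ∧
    ∀ (S : Type*),
      ¬ ∃ (fT : flatSub (FreeGroup S) (FreeGroup S) →*
            flatSub (FreeGroup Unit) (FreeGroup Bool))
          (fG : (FreeGroup S ∗ FreeGroup S) →* (FreeGroup Unit ∗ FreeGroup Bool)),
        XModHom
          (MulAut.conjNormal :
            (FreeGroup S ∗ FreeGroup S) →* MulAut (flatSub (FreeGroup S) (FreeGroup S)))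
          (flatSub (FreeGroup S) (FreeGroup S)).subtype
          (MulAut.conjNormal :
            (FreeGroup Unit ∗ FreeGroup Bool) →*
              MulAut (flatSub (FreeGroup Unit) (FreeGroup Bool)))
          (flatSub (FreeGroup Unit) (FreeGroup Bool)).subtype fT fG ∧
        Bijective fT ∧ Bijective fG := by
  classical
  constructor
  · -- Projectivity
    intro T' G' _ _ φ' d' hXM fT fG hf hsT hsG
    open XProofAux Monoid in
    obtain ⟨hf1, hf2⟩ := hf
    have hf1' : ∀ t : T', ((fT t : Eg)) = fG (d' t) := fun t => DFunLike.congr_fun hf1 t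
    -- choices of preimages
    set tc : Bool → T' := fun c => (hsT (kel 0 c)).choose with htc_def
    have htc : ∀ c, fT (tc c) = kel 0 c := fun c => (hsT (kel 0 c)).choose_spec
    set u' : G' := (hsG (Coprod.inl uu)).choose with hu'_def
    have hu' : fG u' = Coprod.inl uu := (hsG (Coprod.inl uu)).choose_spec
    -- the section on the free product
    set gG : Eg →* G' :=
      Monoid.Coprod.lift (FreeGroup.lift fun _ => u') (FreeGroup.lift fun c => d' (tc c))
      with hgG_def
    have gG_inl : ∀ n : ℤ, gG (Coprod.inl (uu ^ n)) = u' ^ n := by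
      intro n
      rw [hgG_def, Monoid.Coprod.lift_apply_inl, map_zpow]
      congr 1
      exact FreeGroup.lift_apply_of
    have gG_inl1 : gG (Coprod.inl uu) = u' := by
      have := gG_inl 1
      rwa [zpow_one, zpow_one] at this
    have gG_inr : ∀ c : Bool, gG (Coprod.inr (FreeGroup.of c)) = d' (tc c) := by
      intro c
      rw [hgG_def, Monoid.Coprod.lift_apply_inr]
      exact FreeGroup.lift_apply_of
    have fG_u'_zpow : ∀ n : ℤ, fG (u' ^ n) = Coprod.inl (uu ^ n) := by
      intro n
      rw [map_zpow, hu', ← map_zpow]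
    -- the section on the kernel
    set gT : flatSub Pg Xg →* T' :=
      (FreeGroup.lift fun x : ℤ × Bool => φ' (u' ^ x.1) (tc x.2)).comp rHom with hgT_def
    have gT_kel : ∀ (n : ℤ) (c : Bool), gT (kel n c) = φ' (u' ^ n) (tc c) := by
      intro n c
      rw [hgT_def]
      show (FreeGroup.lift fun x : ℤ × Bool => φ' (u' ^ x.1) (tc x.2))
        (rHom (sHom (FreeGroup.of (n, c)))) = _
      rw [rHom_sHom_apply]
      exact FreeGroup.lift_apply_of
    have gT_kel0 : ∀ c : Bool, gT (kel 0 c) = tc c := by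
      intro c
      rw [gT_kel, zpow_zero, map_one]
      rfl
    refine ⟨gT, gG, ⟨?_, ?_⟩, ?_, ?_⟩
    · -- d' ∘ gT = gG ∘ incl
      apply N_hom_ext
      intro n c
      show d' (gT (kel n c)) = gG ((kel n c : Eg))
      rw [gT_kel, hXM.compat, kel_coe, map_mul, map_mul, gG_inl, gG_inl, gG_inr]
      rw [zpow_neg]
    · -- equivariance
      have hSP : ∀ g : Eg, ∀ t : flatSub Pg Xg,
          gT (MulAut.conjNormal g t) = φ' (gG g) (gT t) := by
        set SP : Subgroup Eg :=
          { carrier := {g : Eg | ∀ t, gT (MulAut.conjNormal g t) = φ' (gG g) (gT t)}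
            one_mem' := by
              intro t
              simp
            mul_mem' := by
              intro a b ha hb t
              rw [map_mul, MulAut.mul_apply, ha, hb, map_mul, map_mul, MulAut.mul_apply]
            inv_mem' := by
              intro g hg t
              have h1 : MulAut.conjNormal g (MulAut.conjNormal g⁻¹ t) = t := by
                rw [← MulAut.mul_apply, ← map_mul, mul_inv_cancel, map_one, MulAut.one_apply]
              have h2 := hg (MulAut.conjNormal g⁻¹ t)
              rw [h1] at h2
              rw [h2, ← MulAut.mul_apply, ← map_mul, ← map_mul, inv_mul_cancel, map_one,
                map_one, MulAut.one_apply] } with hSP_def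
        have hgen1 : (Coprod.inl uu : Eg) ∈ SP := by
          have key : gT.comp (MulAut.conjNormal (Coprod.inl uu : Eg)).toMonoidHom
              = (φ' (gG (Coprod.inl uu))).toMonoidHom.comp gT := by
            apply N_hom_ext
            intro n c
            show gT (MulAut.conjNormal (Coprod.inl uu : Eg) (kel n c))
              = φ' (gG (Coprod.inl uu)) (gT (kel n c))
            have hconj : MulAut.conjNormal (Coprod.inl uu : Eg) (kel n c) = kel (n + 1) c := by
              have := conjNormal_inl_kel 1 n c
              rwa [zpow_one] at this
            rw [hconj, gT_kel, gT_kel, gG_inl1]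
            have : u' ^ (n + 1) = u' * u' ^ n := by
              rw [add_comm, zpow_one_add]
            rw [this, map_mul, MulAut.mul_apply]
          intro t
          exact DFunLike.congr_fun key t
        have hgen2 : ∀ c₀ : Bool, (Coprod.inr (FreeGroup.of c₀) : Eg) ∈ SP := by
          intro c₀ t
          rw [conjNormal_inr_of, map_mul, map_mul, map_inv, gT_kel0, gG_inr, hXM.peiffer]
        have : ∀ g : Eg, g ∈ SP := by
          intro g
          induction g using Monoid.Coprod.induction_on with
          | inl p =>
            obtain ⟨k, rfl⟩ := exists_zpow p
            rw [(Coprod.inl : Pg →* Eg).map_zpow]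
            exact zpow_mem hgen1 k
          | inr x =>
            induction x using FreeGroup.induction_on with
            | C1 =>
              rw [(Coprod.inr : Xg →* Eg).map_one]
              exact one_mem SP
            | of c => exact hgen2 c
            | inv_of c hc =>
              rw [(Coprod.inr : Xg →* Eg).map_inv]
              exact inv_mem hc
            | mul x y hx hy =>
              rw [(Coprod.inr : Xg →* Eg).map_mul]
              exact mul_mem hx hy
          | mul x y hx hy => exact mul_mem hx hy
        exact this
      exact fun g t => hSP g t
    · -- fT ∘ gT = id
      apply N_hom_ext
      intro n c
      show fT (gT (kel n c)) = kel n c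
      rw [gT_kel, hf2, fG_u'_zpow, htc, conjNormal_inl_kel, zero_add]
    · -- fG ∘ gG = id
      apply Monoid.Coprod.hom_ext
      · apply FreeGroup.ext_hom
        intro a
        show fG (gG (Coprod.inl (FreeGroup.of a))) = Coprod.inl (FreeGroup.of a)
        cases a
        have : (FreeGroup.of () : Pg) = uu ^ (1 : ℤ) := by rw [zpow_one]; rfl
        rw [this, gG_inl, fG_u'_zpow]
      · apply FreeGroup.ext_hom
        intro c
        show fG (gG (Coprod.inr (FreeGroup.of c))) = Coprod.inr (FreeGroup.of c)
        rw [gG_inr, ← hf1' (tc c), htc, kel_zero_coe]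
  · -- Not free
    intro S
    rintro ⟨fT, fG, ⟨hc, he⟩, hbT, hbG⟩
    open XProofAux Monoid in
    -- the kernel of `π_P ∘ fG` is `flatSub S S`
    have hker : ((piHom Pg Xg).comp fG).ker = (piHom (FreeGroup S) (FreeGroup S)).ker := by
      ext g
      simp only [MonoidHom.mem_ker, MonoidHom.comp_apply]
      constructor
      · intro hg
        obtain ⟨t, ht⟩ := hbT.2 ⟨fG g, hg⟩
        have h1 := DFunLike.congr_fun hc t
        simp only [MonoidHom.comp_apply, Subgroup.coe_subtype] at h1
        rw [ht] at h1
        have h1' : fG ((t : FreeGroup S ∗ FreeGroup S)) = fG g := h1.symm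
        have h2 : (t : FreeGroup S ∗ FreeGroup S) = g := hbG.1 h1'
        rw [← h2]
        exact t.2
      · intro hg
        have hmem : g ∈ flatSub (FreeGroup S) (FreeGroup S) := hg
        have h1 := DFunLike.congr_fun hc (⟨g, hmem⟩ : flatSub (FreeGroup S) (FreeGroup S))
        simp only [MonoidHom.comp_apply, Subgroup.coe_subtype] at h1
        have h1' : fG g = ((fT ⟨g, hmem⟩ : Eg)) := h1.symm
        show piHom Pg Xg (fG g) = 1
        rw [h1']
        exact (fT ⟨g, hmem⟩).2
    have surj1 : Surjective (piHom (FreeGroup S) (FreeGroup S)) := by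
      intro b
      exact ⟨Monoid.Coprod.inl b, by simp [piHom]⟩
    have surjP : Surjective (piHom Pg Xg) := by
      intro b
      exact ⟨Monoid.Coprod.inl b, by simp [piHom]⟩
    have surj2 : Surjective ((piHom Pg Xg).comp fG) := surjP.comp hbG.2
    -- `FreeGroup S ≃* FreeGroup Unit`
    have eP : FreeGroup S ≃* Pg :=
      ((QuotientGroup.quotientKerEquivOfSurjective _ surj1).symm.trans
        (QuotientGroup.quotientMulEquivOfEq hker.symm)).trans
        (QuotientGroup.quotientKerEquivOfSurjective _ surj2)
    have eE : (FreeGroup S ∗ FreeGroup S) ≃* Eg := MulEquiv.ofBijective fG hbG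
    -- counting homomorphisms into `C₂`
    set C := Multiplicative (ZMod 2) with hC_def
    have hcardC : Nat.card C = 2 := by
      rw [Nat.card_eq_fintype_card]
      rfl
    have eq1 : (S → C) ≃ (Unit → C) :=
      ((FreeGroup.lift.trans (homCongr eP)).trans FreeGroup.lift.symm)
    have eqBig : ((S → C) × (S → C)) ≃ ((Unit → C) × (Bool → C)) :=
      ((((Equiv.prodCongr FreeGroup.lift FreeGroup.lift).trans
        Monoid.Coprod.liftEquiv).trans (homCongr eE)).trans
        Monoid.Coprod.liftEquiv.symm).trans
        (Equiv.prodCongr FreeGroup.lift.symm FreeGroup.lift.symm)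
    have c1 : Nat.card (S → C) = 2 := by
      rw [Nat.card_congr eq1, Nat.card_congr (Equiv.funUnique Unit C), hcardC]
    have cBool : Nat.card (Bool → C) = 4 := by
      rw [Nat.card_congr (Equiv.boolArrowEquivProd C), Nat.card_prod, hcardC]
    have cUnit : Nat.card (Unit → C) = 2 := by
      rw [Nat.card_congr (Equiv.funUnique Unit C), hcardC]
    have c2 : Nat.card ((S → C) × (S → C)) = Nat.card ((Unit → C) × (Bool → C)) :=
      Nat.card_congr eqBig
    rw [Nat.card_prod, Nat.card_prod, c1, cUnit, cBool] at c2
    omega
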